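/- Let U ⊆ ℂ be open, let a, b, c, d ∈ ℂ with a·d − b·c = 1, set γ(z) = (a·z+b)/(c·z+d), and assume γ(z) ∈ U for all z ∈ U with c·z+d ≠ 0. Let k ∈ ℤ and let α, β : ℂ → ℂ be analytic on U with α(γ(z)) = (c·z+d)^k·α(z) and β(γ(z)) = (c·z+d)^{k+2}·β(z) for all z ∈ U with c·z+d ≠ 0. Define φ_{α,β}(w) = w + k·α(w)/(α'(w) + β(w)). Then for every z ∈ U such that c·z+d ≠ 0, α'(z) + β(z) ≠ 0, α'(γ(z)) + β(γ(z)) ≠ 0, and c·φ_{α,β}(z) + d ≠ 0, one has φ_{α,β}(γ(z)) = (a·φ_{α,β}(z) + b)/(c·φ_{α,β}(z) + d). -/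

import Mathlib

lemma mobius_shift_aux (a b c d z w : ℂ) (hdet : a * d - b * c = 1)
    (ht : c * z + d ≠ 0) (hD : c * (z + w) + d ≠ 0) :
    (a * z + b) / (c * z + d) + w / ((c * z + d) * (c * (z + w) + d))
      = (a * (z + w) + b) / (c * (z + w) + d) := by
  rw [div_add_div _ _ ht (mul_ne_zero ht hD), div_eq_div_iff (mul_ne_zero ht (mul_ne_zero ht hD)) hD]
  linear_combination (-1) * w * ((c*z+d)^2 + c*w*(c*z+d)) * hdet

/-- Equivariance of the paper's biweight `(k, k+2)` φ-operator
`φ_{α,β}(z) = z + k·α/(α' + β)`. -/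
theorem biweight_phi_operator_equivariance
    (U : Set ℂ) (hU : IsOpen U)
    (a b c d : ℂ) (hdet : a * d - b * c = 1)
    (γ : ℂ → ℂ) (hγ : γ = fun z => (a * z + b) / (c * z + d))
    (hmaps : ∀ z ∈ U, c * z + d ≠ 0 → γ z ∈ U)
    (k : ℤ) (α β : ℂ → ℂ)
    (hα : AnalyticOnNhd ℂ α U) (hβ : AnalyticOnNhd ℂ β U)
    (hautoα : ∀ z ∈ U, c * z + d ≠ 0 → α (γ z) = (c * z + d) ^ k * α z)
    (hautoβ : ∀ z ∈ U, c * z + d ≠ 0 → β (γ z) = (c * z + d) ^ (k + 2) * β z)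
    (φ : ℂ → ℂ) (hφ : φ = fun w => w + (k : ℂ) * α w / (deriv α w + β w)) :
    ∀ z ∈ U, c * z + d ≠ 0 →
      deriv α z + β z ≠ 0 → deriv α (γ z) + β (γ z) ≠ 0 →
      c * φ z + d ≠ 0 →
      φ (γ z) = (a * φ z + b) / (c * φ z + d) := by
  subst hγ hφ
  intro z hz ht hS hden2 hden3
  simp only at hden3 ⊢
  set t := c * z + d with htdef
  set γ : ℂ → ℂ := fun z => (a * z + b) / (c * z + d) with hγ
  have hγz : γ z ∈ U := hmaps z hz ht
  have hαz : HasDerivAt α (deriv α z) z := ((hα z hz).differentiableAt).hasDerivAt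
  have hαγ : HasDerivAt α (deriv α (γ z)) (γ z) := ((hα _ hγz).differentiableAt).hasDerivAt
  have hlin : HasDerivAt (fun w => c * w + d) c z := by
    simpa using ((hasDerivAt_id z).const_mul c).add_const d
  have hnum : HasDerivAt (fun w => a * w + b) a z := by
    simpa using ((hasDerivAt_id z).const_mul a).add_const b
  have hγ' : HasDerivAt γ (1 / t ^ 2) z := by
    have h := hnum.div hlin ht
    have h1 : (a * t - (a * z + b) * c) = 1 := by linear_combination hdet
    rw [h1] at h
    exact h
  have hcomp : HasDerivAt (fun w => α (γ w)) (deriv α (γ z) * (1 / t ^ 2)) z :=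
    hαγ.comp z hγ'
  have hzpow : HasDerivAt (fun w => (c * w + d) ^ k) ((k : ℂ) * t ^ (k - 1) * c) z :=
    by have := (hasDerivAt_zpow k t (Or.inl ht)).comp z hlin; exact this
  have hg : HasDerivAt (fun w => (c * w + d) ^ k * α w)
      ((k : ℂ) * t ^ (k - 1) * c * α z + (c * z + d) ^ k * deriv α z) z := hzpow.mul hαz
  have hopen : IsOpen {w : ℂ | c * w + d ≠ 0} :=
    isOpen_compl_singleton.preimage (by fun_prop)
  have hev : (fun w => α (γ w)) =ᶠ[nhds z] (fun w => (c * w + d) ^ k * α w) := by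
    filter_upwards [hU.mem_nhds hz, hopen.mem_nhds ht] with w hw hw'
    exact hautoα w hw hw'
  have huniq : deriv α (γ z) * (1 / t ^ 2)
      = (k : ℂ) * t ^ (k - 1) * c * α z + t ^ k * deriv α z :=
    hcomp.unique (hg.congr_of_eventuallyEq hev)
  have hkm : t ^ k = t ^ (k - 1) * t := by
    rw [← zpow_add_one₀ ht]; ring_nf
  have hk2 : t ^ (k + 2) = t ^ (k - 1) * t ^ 3 := by
    rw [show t ^ (3:ℕ) = t ^ (3:ℤ) from (zpow_natCast t 3).symm, ← zpow_add₀ ht]; ring_nf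
  have hPm : t ^ (k - 1) ≠ 0 := zpow_ne_zero _ ht
  set Pm := t ^ (k - 1) with hPmdef
  clear_value Pm
  have hDγ : deriv α (γ z) = (k : ℂ) * c * Pm * t ^ 2 * α z + Pm * t ^ 3 * deriv α z := by
    have ht2 : t ^ 2 ≠ 0 := pow_ne_zero _ ht
    field_simp at huniq
    rw [hkm] at huniq
    linear_combination huniq
  have hsum : deriv α (γ z) + β (γ z)
      = Pm * t ^ 2 * ((k : ℂ) * c * α z + t * (deriv α z + β z)) := by
    rw [hDγ, hautoβ z hz ht, hk2]; ring
  set w := (k : ℂ) * α z / (deriv α z + β z) with hwdef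
  rw [hsum, hautoα z hz ht, hkm]
  have hQD : (k : ℂ) * c * α z + t * (deriv α z + β z)
      = (deriv α z + β z) * (c * (z + w) + d) := by
    rw [hwdef]
    field_simp
    ring
  have hterm : (k : ℂ) * (Pm * t * α z)
        / (Pm * t ^ 2 * ((k : ℂ) * c * α z + t * (deriv α z + β z)))
      = w / (t * (c * (z + w) + d)) := by
    rw [hQD, show Pm * t ^ 2 * ((deriv α z + β z) * (c * (z + w) + d))
        = (Pm * t * (deriv α z + β z)) * (t * (c * (z + w) + d)) by ring,
      show (k : ℂ) * (Pm * t * α z) = (Pm * t * (deriv α z + β z)) * w by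
        rw [hwdef]; field_simp,
      mul_div_mul_left _ _ (mul_ne_zero (mul_ne_zero hPm ht) hS)]
  show (a * z + b) / (c * z + d) + _ = _
  rw [← htdef, hterm, htdef]
  exact mobius_shift_aux a b c d z w hdet ht hden3
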